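/- Subsystem S₁ (the system with Q₁ = 0) has a unique equilibrium in the region Γ = {(A,L,C) : A,L,C ≥ 0, A+L+C ≤ ρN}, namely E^f = (A^f, L^f, 0) with the explicit formulas given. -/

import Mathlib

set_option maxHeartbeats 1000000 in


/-- E^f = (A^f, L^f, 0) is the unique equilibrium of subsystem S₁
in the region Γ = {A,L,C ≥ 0, A+L+C ≤ ρN}. -/
theorem stmt5_Ef_unique
    (asa aas aal als acs bls bcs ρ N : ℝ)
    (hasa : 0 < asa) (haas : 0 < aas) (haal : 0 < aal)
    (hals : 0 < als) (hacs : 0 < acs) (hbls : 0 < bls) (hbcs : 0 < bcs)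
    (hρ : 0 < ρ) (hρ1 : ρ < 1) (hN : 0 < N) :
    let η₁ := 1 / ((asa / (aas + aal)) * (1 + aal / als))
    let ξ₁ := (aal * bls / (als * (aas + aal))) / ((asa / (aas + aal)) * (1 + aal / als))
    let Lf := ((ρ * N * ξ₁ - 1 - η₁) +
        Real.sqrt ((ρ * N * ξ₁ - 1 - η₁) ^ 2 + 4 * ξ₁ * ρ * N)) /
      (2 * ξ₁ * (1 + als / aal))
    let Af := (als / aal) * Lf
    (0 ≤ Af ∧ 0 ≤ Lf ∧ Af + Lf + 0 ≤ ρ * N ∧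
      (asa + bls * Lf + bcs * 0) * (ρ * N - Af - Lf - 0) - (aas + aal) * Af = 0 ∧
      aal * Af - als * Lf = 0 ∧ -acs * (0 : ℝ) = 0) ∧
    ∀ A L C : ℝ, 0 ≤ A → 0 ≤ L → 0 ≤ C → A + L + C ≤ ρ * N →
      (asa + bls * L + bcs * C) * (ρ * N - A - L - C) - (aas + aal) * A = 0 →
      aal * A - als * L = 0 → -acs * C = 0 →
      A = Af ∧ L = Lf ∧ C = 0 := by
  intro η₁ ξ₁ Lf Af
  have hη1 : η₁ = 1 / ((asa / (aas + aal)) * (1 + aal / als)) := rfl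
  have hξ1 : ξ₁ = (aal * bls / (als * (aas + aal))) / ((asa / (aas + aal)) * (1 + aal / als)) := rfl
  have hAf : Af = (als / aal) * Lf := rfl
  have hLf0 : Lf = ((ρ * N * ξ₁ - 1 - η₁) +
      Real.sqrt ((ρ * N * ξ₁ - 1 - η₁) ^ 2 + 4 * ξ₁ * ρ * N)) /
    (2 * ξ₁ * (1 + als / aal)) := rfl
  clear_value η₁ ξ₁ Lf Af
  have haa : 0 < aas + aal := by linarith
  have hξ : 0 < ξ₁ := by rw [hξ1]; positivity
  have hk : 0 < 1 + als / aal := by positivity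
  set m := ρ * N * ξ₁ - 1 - η₁ with hm
  have hD : 0 ≤ m ^ 2 + 4 * ξ₁ * ρ * N := by positivity
  set s := Real.sqrt (m ^ 2 + 4 * ξ₁ * ρ * N) with hs
  have hs2 : s ^ 2 = m ^ 2 + 4 * ξ₁ * ρ * N := Real.sq_sqrt hD
  have hs0 : 0 ≤ s := Real.sqrt_nonneg _
  have hρN : 0 < ρ * N := mul_pos hρ hN
  have hms : -m < s := by nlinarith [mul_pos hξ hρN]
  have hLf : Lf = (m + s) / (2 * ξ₁ * (1 + als / aal)) := hLf0
  have hLfpos : 0 < Lf := by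
    rw [hLf]
    exact div_pos (by linarith) (by positivity)
  have hd : Lf * (2 * ξ₁ * (1 + als / aal)) = m + s := by
    rw [hLf]; field_simp
  -- Lf satisfies the quadratic ξ₁ k² L² - m k L - ρN = 0
  have hq4 : 4 * ξ₁ * (ξ₁ * (1 + als / aal) ^ 2 * Lf ^ 2
      - m * (1 + als / aal) * Lf - ρ * N) = 0 := by
    linear_combination (Lf * (2 * ξ₁ * (1 + als / aal)) + s - m) * hd + hs2
  have hq : ξ₁ * (1 + als / aal) ^ 2 * Lf ^ 2
      - m * (1 + als / aal) * Lf - ρ * N = 0 := by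
    rcases mul_eq_zero.mp hq4 with h | h
    · exact absurd h (by positivity)
    · exact h
  -- key algebraic identity relating the vector field to the quadratic
  have key : ∀ L : ℝ,
      (asa + bls * L + bcs * 0) * (ρ * N - (als / aal) * L - L - 0)
        - (aas + aal) * ((als / aal) * L)
      = asa * ((ρ * N + m * (1 + als / aal) * L)
        - ξ₁ * (1 + als / aal) ^ 2 * L ^ 2) := by
    intro L
    rw [hm, hξ1, hη1]
    field_simp
    ring
  have heqLf : (asa + bls * Lf + bcs * 0) * (ρ * N - Af - Lf - 0)
      - (aas + aal) * Af = 0 := by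
    rw [hAf, key Lf]
    linear_combination (-asa) * hq
  constructor
  · refine ⟨?_, hLfpos.le, ?_, heqLf, by rw [hAf]; field_simp; ring, by ring⟩
    · rw [hAf]; positivity
    · -- Af + Lf ≤ ρN from the equilibrium equation
      by_contra hcon
      push_neg at hcon
      have hAfnn : 0 ≤ Af := by rw [hAf]; positivity
      have h1 : 0 < asa + bls * Lf + bcs * 0 := by nlinarith
      have h2 : 0 ≤ (aas + aal) * Af := mul_nonneg haa.le hAfnn
      have h3 : (asa + bls * Lf + bcs * 0) * (ρ * N - Af - Lf - 0) < 0 :=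
        mul_neg_of_pos_of_neg h1 (by linarith)
      linarith [heqLf, h2, h3]
  · intro A L C hA hL hC hsum heq hAL hC0
    have hC' : C = 0 := by
      rcases mul_eq_zero.mp (by linarith : acs * C = 0) with h | h
      · exact absurd h hacs.ne'
      · exact h
    subst hC'
    have hA' : A = (als / aal) * L := by
      field_simp
      linarith
    subst hA'
    have hqL : ξ₁ * (1 + als / aal) ^ 2 * L ^ 2
        - m * (1 + als / aal) * L - ρ * N = 0 := by
      rw [key L] at heq
      rcases mul_eq_zero.mp heq with h | h
      · exact absurd h hasa.ne'
      · linarith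
    have hdiff : (L - Lf) * (ξ₁ * (1 + als / aal) ^ 2 * (L + Lf)
        - m * (1 + als / aal)) = 0 := by
      linear_combination hqL - hq
    rcases mul_eq_zero.mp hdiff with h | hfac
    · have hLLf : L = Lf := by linarith
      exact ⟨by rw [hLLf, hAf], hLLf, rfl⟩
    · exfalso
      have hprod : ξ₁ * (1 + als / aal) ^ 2 * L * Lf = -(ρ * N) := by
        linear_combination L * hfac - hqL
      nlinarith [mul_nonneg (mul_nonneg (mul_nonneg hξ.le (sq_nonneg (1 + als / aal))) hL) hLfpos.le]
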